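/- Let X be a uniformly convex Banach space satisfying Opial's condition, C a nonempty weakly compact convex subset, and T : C → C a mapping satisfying condition (D_a). Let {x_n} be generated by x_1 ∈ C, z_n = (1 − c_n)x_n + c_n T x_n, y_n = (1 − b_n)z_n + b_n T z_n, x_{n+1} = (1 − a_n)T z_n + a_n T y_n, with 0 < a ≤ a_n, b_n, c_n ≤ b < 1. Then {x_n} converges weakly to a fixed point of T. -/

import Mathlib

open Filter Topology

variable {X : Type*}

/-- The set `C(T, x, α)` from the definition of condition `(D_a)`. -/
def DaSet [NormedAddCommGroup X] [NormedSpace ℝ X]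
    (C : Set X) (T : X → X) (x : X) (α : ℝ) : Set X :=
  {y ∈ C | ∃ p ∈ C, ∃ q ∈ C, ‖T p - p‖ ≤ ‖T x - x‖ ∧ ‖T q - q‖ ≤ ‖T x - x‖ ∧
    y = (1 - α) • p + α • T q}

/-- `T` satisfies condition `(D_a)` on `C` with constant `a`. -/
def CondDa [NormedAddCommGroup X] [NormedSpace ℝ X]
    (C : Set X) (T : X → X) (a : ℝ) : Prop :=
  ∀ α ∈ Set.Icc a 1, ∀ x ∈ C, ∀ y ∈ DaSet C T x α, ‖T x - T y‖ ≤ ‖x - y‖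

/-- Weak convergence of a sequence in a normed space. -/
def WeakConv [NormedAddCommGroup X] [NormedSpace ℝ X] (u : ℕ → X) (x : X) : Prop :=
  ∀ f : X →L[ℝ] ℝ, Tendsto (fun n => f (u n)) atTop (𝓝 (f x))

/-- Opial's condition. -/
def OpialCond (X : Type*) [NormedAddCommGroup X] [NormedSpace ℝ X] : Prop :=
  ∀ (u : ℕ → X) (x : X), WeakConv u x → ∀ y, y ≠ x →
    liminf (fun n => ‖u n - x‖) atTop < liminf (fun n => ‖u n - y‖) atTop


section auxiliary
variable [NormedAddCommGroup X] [NormedSpace ℝ X]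

lemma comb_mem {C : Set X} (hconv : Convex ℝ C) {α : ℝ} (h0 : 0 ≤ α) (h1 : α ≤ 1)
    {u v : X} (hu : u ∈ C) (hv : v ∈ C) : (1 - α) • u + α • v ∈ C :=
  hconv hu hv (by linarith) h0 (by ring)

lemma norm_comb_le {α : ℝ} (h0 : 0 ≤ α) (h1 : α ≤ 1) (u v w : X) :
    ‖(1 - α) • u + α • v - w‖ ≤ (1 - α) * ‖u - w‖ + α * ‖v - w‖ := by
  have h : (1 - α) • u + α • v - w = (1 - α) • (u - w) + α • (v - w) := by module
  rw [h]
  refine (norm_add_le _ _).trans ?_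
  rw [norm_smul, norm_smul, Real.norm_eq_abs, Real.norm_eq_abs,
    abs_of_nonneg (by linarith : (0:ℝ) ≤ 1 - α), abs_of_nonneg h0]

lemma uc_main [UniformConvexSpace X] {R ε c₁ c₂ : ℝ} (hR : 0 < R) (hε : 0 < ε)
    (hc₁ : 0 < c₁) (hc₂ : c₂ < 1) :
    ∃ η > 0, ∀ lam : ℝ, c₁ ≤ lam → lam ≤ c₂ → ∀ u w : X, ‖u‖ ≤ R + η → ‖w‖ ≤ R + η →
      R - η ≤ ‖lam • u + (1 - lam) • w‖ → ‖u - w‖ ≤ ε := by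
  have hε0 : (0:ℝ) < ε / (R + 1) := div_pos hε (by linarith)
  obtain ⟨δ, hδ, hδp⟩ := exists_forall_closed_ball_dist_add_le_two_sub X hε0
  set δ' := min δ 1 with hδ'def
  have hδ'0 : 0 < δ' := lt_min hδ one_pos
  have hδ'1 : δ' ≤ 1 := min_le_right _ _
  set μ0 := min c₁ (1 - c₂) with hμ0def
  have hμ00 : 0 < μ0 := lt_min hc₁ (by linarith)
  set κ := μ0 * δ' with hκdef
  have hκ0 : 0 < κ := mul_pos hμ00 hδ'0
  refine ⟨min 1 (R * κ / 4), lt_min one_pos (by positivity), ?_⟩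
  intro lam hl1 hl2 u w hu hw hcomb
  by_contra hcon
  push_neg at hcon
  set η := min 1 (R * κ / 4) with hηdef
  have hη0 : 0 < η := lt_min one_pos (by positivity)
  have hη1 : η ≤ 1 := min_le_left _ _
  have hη2 : η ≤ R * κ / 4 := min_le_right _ _
  set R' := R + η with hR'def
  have hR'0 : 0 < R' := by positivity
  -- scaled vectors
  have hu' : ‖R'⁻¹ • u‖ ≤ 1 := by
    rw [norm_smul, Real.norm_eq_abs, abs_of_nonneg (by positivity)]
    rw [inv_mul_le_iff₀ hR'0, mul_one]; exact hu
  have hw' : ‖R'⁻¹ • w‖ ≤ 1 := by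
    rw [norm_smul, Real.norm_eq_abs, abs_of_nonneg (by positivity)]
    rw [inv_mul_le_iff₀ hR'0, mul_one]; exact hw
  have hdist : ε / (R + 1) ≤ ‖R'⁻¹ • u - R'⁻¹ • w‖ := by
    rw [← smul_sub, norm_smul, Real.norm_eq_abs, abs_of_nonneg (by positivity),
      inv_mul_eq_div, div_le_div_iff₀ (by linarith : (0:ℝ) < R + 1) hR'0]
    nlinarith [hcon.le, hε.le, hη1, hη0.le, norm_nonneg (u - w)]
  have hmid := hδp hu' hw' hdist
  have hmid' : ‖u + w‖ ≤ R' * (2 - δ') := by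
    have : ‖R'⁻¹ • u + R'⁻¹ • w‖ ≤ 2 - δ' := le_trans hmid (by simp [hδ'def]; linarith [min_le_left δ 1])
    rw [← smul_add, norm_smul, Real.norm_eq_abs, abs_of_nonneg (by positivity),
      inv_mul_le_iff₀ hR'0] at this
    linarith [this]
  set μ := min lam (1 - lam) with hμdef
  have hμ0' : μ0 ≤ μ := le_min (le_trans (min_le_left _ _) hl1) (le_trans (min_le_right _ _) (by linarith))
  have hμa : μ ≤ lam := min_le_left _ _
  have hμb : μ ≤ 1 - lam := min_le_right _ _
  have hμpos : 0 < μ := lt_of_lt_of_le hμ00 hμ0'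
  have hsplit : lam • u + (1 - lam) • w = μ • (u + w) + ((lam - μ) • u + (1 - lam - μ) • w) := by
    module
  have hbound : ‖lam • u + (1 - lam) • w‖ ≤ R' * (1 - μ * δ') := by
    rw [hsplit]
    have h1 : ‖μ • (u + w)‖ ≤ μ * (R' * (2 - δ')) := by
      rw [norm_smul, Real.norm_eq_abs, abs_of_nonneg hμpos.le]
      exact mul_le_mul_of_nonneg_left hmid' hμpos.le
    have h2 : ‖(lam - μ) • u + (1 - lam - μ) • w‖ ≤ (lam - μ) * R' + (1 - lam - μ) * R' := by
      refine (norm_add_le _ _).trans ?_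
      gcongr
      · rw [norm_smul, Real.norm_eq_abs, abs_of_nonneg (by linarith)]
        exact mul_le_mul_of_nonneg_left hu (by linarith)
      · rw [norm_smul, Real.norm_eq_abs, abs_of_nonneg (by linarith)]
        exact mul_le_mul_of_nonneg_left hw (by linarith)
    calc ‖μ • (u + w) + ((lam - μ) • u + (1 - lam - μ) • w)‖
        ≤ ‖μ • (u + w)‖ + ‖(lam - μ) • u + (1 - lam - μ) • w‖ := norm_add_le _ _
      _ ≤ μ * (R' * (2 - δ')) + ((lam - μ) * R' + (1 - lam - μ) * R') := by linarith
      _ = R' * (1 - μ * δ') := by ring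
  have hfinal : R' * (1 - μ * δ') < R - η := by
    have h1 : μ * δ' ≥ κ := by
      rw [hκdef]; exact mul_le_mul_of_nonneg_right hμ0' hδ'0.le
    have hκ1 : μ * δ' ≤ 1 := le_trans (mul_le_one₀ (le_trans hμb (by linarith)) hδ'0.le hδ'1) le_rfl
    have h2 : R' * (1 - μ * δ') ≤ R' * (1 - κ) := by
      apply mul_le_mul_of_nonneg_left _ hR'0.le; linarith
    have h3 : R' * (1 - κ) ≤ R + η - R * κ := by
      have : R' * (1 - κ) = R + η - (R + η) * κ := by rw [hR'def]; ring
      rw [this]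
      have : R * κ ≤ (R + η) * κ := by nlinarith
      linarith
    have h4 : R * κ ≥ 4 * η := by linarith [hη2]
    linarith
  linarith [le_trans hcomb hbound]


lemma schu [UniformConvexSpace X] {c₁ c₂ : ℝ} (hc₁ : 0 < c₁) (hc₂ : c₂ < 1)
    {lam : ℕ → ℝ} (hlam : ∀ n, c₁ ≤ lam n ∧ lam n ≤ c₂)
    (u w : ℕ → X) {D : ℕ → ℝ} {d : ℝ}
    (hu : ∀ n, ‖u n‖ ≤ D n) (hw : ∀ n, ‖w n‖ ≤ D n)
    (hD : Tendsto D atTop (𝓝 d))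
    (hcomb : Tendsto (fun n => ‖lam n • u n + (1 - lam n) • w n‖) atTop (𝓝 d)) :
    Tendsto (fun n => ‖u n - w n‖) atTop (𝓝 0) := by
  have hd0 : 0 ≤ d := le_of_tendsto_of_tendsto' tendsto_const_nhds hD
    (fun n => le_trans (norm_nonneg _) (hu n))
  rcases eq_or_lt_of_le hd0 with hd | hd
  · -- d = 0 : squeeze
    have h2D : Tendsto (fun n => 2 * D n) atTop (𝓝 0) := by
      have := hD.const_mul 2
      rwa [← hd, mul_zero] at this
    refine squeeze_zero (fun n => norm_nonneg _) (fun n => ?_) h2D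
    calc ‖u n - w n‖ ≤ ‖u n‖ + ‖w n‖ := norm_sub_le _ _
      _ ≤ 2 * D n := by linarith [hu n, hw n]
  · -- d > 0
    rw [NormedAddCommGroup.tendsto_atTop]
    intro ε hε
    obtain ⟨η, hη0, hP⟩ := uc_main (X := X) hd (half_pos hε) hc₁ hc₂
    have h1 : ∀ᶠ n in atTop, D n ≤ d + η :=
      hD.eventually (eventually_le_nhds (by linarith))
    have h2 : ∀ᶠ n in atTop, d - η ≤ ‖lam n • u n + (1 - lam n) • w n‖ :=
      hcomb.eventually (eventually_ge_nhds (by linarith))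
    obtain ⟨N, hN⟩ := (h1.and h2).exists_forall_of_atTop
    refine ⟨N, fun n hn => ?_⟩
    obtain ⟨hDn, hcn⟩ := hN n hn
    have := hP (lam n) (hlam n).1 (hlam n).2 (u n) (w n)
      (le_trans (hu n) (by linarith)) (le_trans (hw n) (by linarith)) hcn
    rw [sub_zero, Real.norm_eq_abs, abs_of_nonneg (norm_nonneg _)]
    exact lt_of_le_of_lt this (half_lt_self hε)


lemma eval_weak_continuous (f : X →L[ℝ] ℝ) :
    Continuous fun x : WeakSpace ℝ X => f ((toWeakSpace ℝ X).symm x) :=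
  WeakBilin.eval_continuous ((topDualPairing ℝ X).flip) f

lemma weakConv_of_tendsto {u : ℕ → X} {p : X}
    (h : Tendsto (fun n => toWeakSpace ℝ X (u n)) atTop (𝓝 (toWeakSpace ℝ X p))) :
    ∀ f : X →L[ℝ] ℝ, Tendsto (fun n => f (u n)) atTop (𝓝 (f p)) := by
  intro f
  have := ((eval_weak_continuous f).tendsto _).comp h
  simpa [Function.comp_def] using this

lemma weak_compact_bounded {C : Set X} (hcomp : IsCompact ((toWeakSpace ℝ X) '' C)) :
    ∃ M : ℝ, 0 ≤ M ∧ ∀ w ∈ C, ‖w‖ ≤ M := by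
  have hpt : ∀ f : X →L[ℝ] ℝ, ∃ b : ℝ, ∀ w : C, ‖f (w : X)‖ ≤ b := by
    intro f
    have himg : IsCompact ((fun x : WeakSpace ℝ X => f ((toWeakSpace ℝ X).symm x)) ''
        ((toWeakSpace ℝ X) '' C)) := hcomp.image (eval_weak_continuous f)
    obtain ⟨b, hb⟩ := himg.isBounded.exists_norm_le
    refine ⟨b, fun w => ?_⟩
    exact hb _ ⟨toWeakSpace ℝ X (w : X), ⟨(w : X), w.2, rfl⟩, by simp⟩
  have key := banach_steinhaus (E := X →L[ℝ] ℝ) (F := ℝ)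
    (g := fun w : C => NormedSpace.inclusionInDoubleDual ℝ X (w : X)) ?_
  · obtain ⟨M, hM⟩ := key
    refine ⟨max M 0, le_max_right _ _, fun w hw => ?_⟩
    have := hM ⟨w, hw⟩
    rw [show ‖NormedSpace.inclusionInDoubleDual ℝ X w‖ = ‖w‖ from
      (NormedSpace.inclusionInDoubleDualLi ℝ (E := X)).norm_map w] at this
    exact le_trans this (le_max_left _ _)
  · intro f
    obtain ⟨b, hb⟩ := hpt f
    exact ⟨b, fun w => by simpa [NormedSpace.dual_def] using hb w⟩

lemma weak_closed_of_convex_closed {s : Set X} (hs : Convex ℝ s) (hcl : IsClosed s) :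
    IsClosed ((toWeakSpace ℝ X) '' s) := by
  have h := hs.toWeakSpace_closure (𝕜 := ℝ)
  rw [hcl.closure_eq] at h
  rw [h]; exact isClosed_closure


lemma exists_weakConv_subseq {C : Set X} (hcomp : IsCompact ((toWeakSpace ℝ X) '' C))
    (u : ℕ → X) (hu : ∀ n, u n ∈ C) :
    ∃ p ∈ C, ∃ φ : ℕ → ℕ, StrictMono φ ∧
      ∀ f : X →L[ℝ] ℝ, Tendsto (fun j => f (u (φ j))) atTop (𝓝 (f p)) := by
  obtain ⟨M, hM0, hM⟩ := weak_compact_bounded hcomp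
  -- the separable closed convex hull of the orbit
  set S : Set X := closure (convexHull ℝ (Set.range u)) with hSdef
  have hSconv : Convex ℝ S := (convex_convexHull ℝ _).closure
  have hScl : IsClosed S := isClosed_closure
  have huS : ∀ n, u n ∈ S := fun n =>
    subset_closure (subset_convexHull ℝ _ (Set.mem_range_self n))
  have hSsep : TopologicalSpace.IsSeparable S := by
    have h1 : TopologicalSpace.IsSeparable
        ((Submodule.span ℝ (Set.range u) : Submodule ℝ X) : Set X) :=
      (Set.countable_range u).isSeparable.span
    exact h1.closure.mono (closure_mono (convexHull_min Submodule.subset_span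
      (Submodule.span ℝ (Set.range u)).convex))
  obtain ⟨c, hc_count, hc_sub⟩ := hSsep
  have hc'_count : (insert (0:X) c).Countable := hc_count.insert 0
  obtain ⟨g, hg⟩ := hc'_count.exists_eq_range ⟨0, Set.mem_insert 0 c⟩
  have hS_cl : ∀ p ∈ S, ∀ ε : ℝ, 0 < ε → ∃ i : ℕ, ‖g i - p‖ < ε := by
    intro p hp ε hε
    have : p ∈ closure (insert (0:X) c) :=
      closure_mono (Set.subset_insert 0 c) (hc_sub hp)
    obtain ⟨b, hb, hdist⟩ := Metric.mem_closure_iff.1 this ε hε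
    rw [hg] at hb
    obtain ⟨i, rfl⟩ := hb
    exact ⟨i, by rwa [← dist_eq_norm, dist_comm]⟩
  -- countable norming family
  set dseq : ℕ → X := fun k => g (Nat.unpair k).1 - g (Nat.unpair k).2 with hdseq
  have hF : ∀ k : ℕ, ∃ F : X →L[ℝ] ℝ, ‖F‖ ≤ 1 ∧ (dseq k ≠ 0 → F (dseq k) = ‖dseq k‖) := by
    intro k
    by_cases h : dseq k = 0
    · exact ⟨0, by simp, fun h' => absurd h h'⟩
    · obtain ⟨F, hF1, hF2⟩ := exists_dual_vector ℝ (dseq k) (norm_ne_zero_iff.2 h)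
      exact ⟨F, le_of_eq hF1, fun _ => by simpa using hF2⟩
  choose F hF1 hF2 using hF
  -- separation property on S
  have hsep : ∀ p q : X, p ∈ S → q ∈ S → (∀ k, F k p = F k q) → p = q := by
    intro p q hp hq hFeq
    by_contra hne
    have hd0 : p - q ≠ 0 := sub_ne_zero.2 hne
    have hdn : (0:ℝ) < ‖p - q‖ := norm_pos_iff.2 hd0
    obtain ⟨i, hi⟩ := hS_cl p hp (‖p - q‖ / 6) (by positivity)
    obtain ⟨j, hj⟩ := hS_cl q hq (‖p - q‖ / 6) (by positivity)
    set k := Nat.pair i j with hk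
    have hk1 : dseq k = g i - g j := by
      simp [hdseq, hk, Nat.unpair_pair]
    have hclose : ‖dseq k - (p - q)‖ < ‖p - q‖ / 3 := by
      rw [hk1]
      have : g i - g j - (p - q) = (g i - p) - (g j - q) := by abel
      rw [this]
      calc ‖(g i - p) - (g j - q)‖ ≤ ‖g i - p‖ + ‖g j - q‖ := norm_sub_le _ _
        _ < ‖p - q‖ / 6 + ‖p - q‖ / 6 := by linarith
        _ = ‖p - q‖ / 3 := by ring
    have hdk : ‖dseq k‖ ≥ 2 * ‖p - q‖ / 3 := by
      have := norm_sub_norm_le (dseq k) (p - q)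
      have h2 := abs_le.1 (le_refl |‖dseq k‖ - ‖p - q‖|)
      have h3 : ‖p - q‖ - ‖dseq k‖ ≤ ‖dseq k - (p - q)‖ := by
        calc ‖p - q‖ - ‖dseq k‖ ≤ |‖dseq k‖ - ‖p - q‖| := by
              rw [abs_sub_comm]; exact le_abs_self _
          _ ≤ ‖dseq k - (p - q)‖ := abs_norm_sub_norm_le _ _
      linarith
    have hdk0 : dseq k ≠ 0 := by
      intro h
      rw [h, norm_zero] at hdk; linarith
    have hFk := hF2 k hdk0
    have hzero : F k (p - q) = 0 := by rw [map_sub, hFeq k, sub_self]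
    have : F k (dseq k) = F k (dseq k - (p - q)) := by
      rw [map_sub (F k) (dseq k) (p - q), hzero, sub_zero]
    have hb : |F k (dseq k - (p - q))| ≤ ‖dseq k - (p - q)‖ := by
      calc |F k (dseq k - (p - q))| ≤ ‖F k‖ * ‖dseq k - (p - q)‖ := (F k).le_opNorm _
        _ ≤ 1 * ‖dseq k - (p - q)‖ := by
            apply mul_le_mul_of_nonneg_right (hF1 k) (norm_nonneg _)
        _ = ‖dseq k - (p - q)‖ := one_mul _
    rw [← this, hFk] at hb
    rw [abs_of_nonneg (norm_nonneg _)] at hb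
    linarith
  -- diagonal extraction in ℝ^ℕ
  set G : ℕ → (ℕ → ℝ) := fun n k => F k (u n) with hG
  have hGP : ∀ n, G n ∈ Set.pi Set.univ (fun _ : ℕ => Set.Icc (-M) M) := by
    intro n k _
    have : |F k (u n)| ≤ M := by
      calc |F k (u n)| ≤ ‖F k‖ * ‖u n‖ := (F k).le_opNorm _
        _ ≤ 1 * M := mul_le_mul (hF1 k) (hM _ (hu n)) (norm_nonneg _) zero_le_one
        _ = M := one_mul _
    exact abs_le.1 this
  have hPc : IsCompact (Set.pi Set.univ (fun _ : ℕ => Set.Icc (-M) M)) :=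
    isCompact_univ_pi fun _ => isCompact_Icc
  obtain ⟨ξ, -, φ, hφ, hGconv⟩ := hPc.tendsto_subseq hGP
  have hcoord : ∀ k, Tendsto (fun j => F k (u (φ j))) atTop (𝓝 (ξ k)) := by
    intro k
    exact (tendsto_pi_nhds.1 hGconv) k
  -- weak cluster point of the subsequence
  set tu : ℕ → WeakSpace ℝ X := fun j => toWeakSpace ℝ X (u (φ j)) with htu
  have hmaple : Filter.map tu atTop ≤ 𝓟 ((toWeakSpace ℝ X) '' C) := by
    rw [le_principal_iff, mem_map]
    exact Eventually.of_forall fun j => ⟨u (φ j), hu _, rfl⟩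
  obtain ⟨ptilde, hpt, hclp⟩ := hcomp.exists_mapClusterPt hmaple
  -- properties of any cluster point
  have hclust : ∀ qt : WeakSpace ℝ X, MapClusterPt qt atTop tu →
      ∃ q : X, qt = toWeakSpace ℝ X q ∧ q ∈ S ∧ ∀ k, F k q = ξ k := by
    intro qt hcl
    have hSweak : IsClosed ((toWeakSpace ℝ X) '' S) := weak_closed_of_convex_closed hSconv hScl
    have hmapleS : Filter.map tu atTop ≤ 𝓟 ((toWeakSpace ℝ X) '' S) := by
      rw [le_principal_iff, mem_map]
      exact Eventually.of_forall fun j => ⟨u (φ j), huS _, rfl⟩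
    have hqS : qt ∈ (toWeakSpace ℝ X) '' S := by
      have h1 : ClusterPt qt (𝓟 ((toWeakSpace ℝ X) '' S)) := (hcl.clusterPt).mono hmapleS
      rw [← hSweak.closure_eq]
      exact (mem_closure_iff_clusterPt (X := WeakSpace ℝ X)).mpr h1
    obtain ⟨q, hqS', hqeq⟩ := hqS
    refine ⟨q, hqeq.symm, hqS', fun k => ?_⟩
    have hcont : Continuous fun x : WeakSpace ℝ X => F k ((toWeakSpace ℝ X).symm x) :=
      eval_weak_continuous (F k)
    have hcomp' : MapClusterPt (F k ((toWeakSpace ℝ X).symm qt)) atTop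
        ((fun x : WeakSpace ℝ X => F k ((toWeakSpace ℝ X).symm x)) ∘ tu) :=
      hcl.tendsto_comp (hcont.tendsto qt)
    have heq : ((fun x : WeakSpace ℝ X => F k ((toWeakSpace ℝ X).symm x)) ∘ tu)
        = fun j => F k (u (φ j)) := rfl
    rw [heq] at hcomp'
    have h2 : ClusterPt (F k ((toWeakSpace ℝ X).symm qt)) (𝓝 (ξ k)) :=
      hcomp'.clusterPt.mono (hcoord k)
    have h3 : F k ((toWeakSpace ℝ X).symm qt) = ξ k := eq_of_nhds_neBot h2
    rw [← h3, hqeq.symm]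
    simp
  obtain ⟨p, hpeq, hpS, hpξ⟩ := hclust ptilde hclp
  obtain ⟨p', hp'C, hp'⟩ := hpt
  have hpC : p ∈ C := by
    have : p' = p := (toWeakSpace ℝ X).injective (by rw [hp', ← hpeq])
    rwa [← this]
  have huniq : ∀ qt ∈ (toWeakSpace ℝ X) '' C, MapClusterPt qt atTop tu →
      qt = toWeakSpace ℝ X p := by
    intro qt _ hcl
    obtain ⟨q, hqeq, hqS, hqξ⟩ := hclust qt hcl
    rw [hqeq, hsep q p hqS hpS (fun k => by rw [hqξ k, hpξ k])]
  have htend : Tendsto tu atTop (𝓝 (toWeakSpace ℝ X p)) := by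
    refine hcomp.tendsto_nhds_of_unique_mapClusterPt ?_ huniq
    exact Eventually.of_forall fun j => ⟨u (φ j), hu _, rfl⟩
  exact ⟨p, hpC, φ, hφ, weakConv_of_tendsto htend⟩


lemma liminf_aux {f g e : ℕ → ℝ} {B : ℝ}
    (hf0 : ∀ n, 0 ≤ f n) (hgB : ∀ n, g n ≤ B)
    (he : Tendsto e atTop (𝓝 0)) (hle : ∀ᶠ n in atTop, f n ≤ g n + e n) :
    liminf f atTop ≤ liminf g atTop := by
  by_contra hcon
  push_neg at hcon
  set A := liminf g atTop with hA
  set Bf := liminf f atTop with hBf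
  set δ := (Bf - A) / 3 with hδdef
  have hδ0 : 0 < δ := by rw [hδdef]; linarith
  have hbg : IsCoboundedUnder (· ≥ ·) atTop g :=
    IsBoundedUnder.isCoboundedUnder_ge ⟨B, eventually_map.mpr (Eventually.of_forall hgB)⟩
  have hfb : IsBoundedUnder (· ≥ ·) atTop f :=
    ⟨0, eventually_map.mpr (Eventually.of_forall hf0)⟩
  have h1 : ∃ᶠ n in atTop, g n < A + δ := frequently_lt_of_liminf_lt hbg (by linarith)
  have h2 : ∀ᶠ n in atTop, Bf - δ < f n := eventually_lt_of_lt_liminf (by linarith) hfb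
  have h3 : ∀ᶠ n in atTop, e n < δ := he.eventually (eventually_lt_nhds hδ0)
  obtain ⟨n, hng, hnf, hne', hnle⟩ := (h1.and_eventually (h2.and (h3.and hle))).exists
  linarith


lemma demiclosed (hOp : OpialCond X) {C : Set X} (hconv : Convex ℝ C)
    {T : X → X} (hT : Set.MapsTo T C C) {a : ℝ} (ha : a ∈ Set.Ioo (1/2 : ℝ) 1)
    (hDa : CondDa C T a) {M : ℝ} (hM : ∀ w ∈ C, ‖w‖ ≤ M)
    {u : ℕ → X} {p : X} (huC : ∀ n, u n ∈ C) (hpC : p ∈ C) (hw : WeakConv u p)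
    (hres : Tendsto (fun n => ‖T (u n) - u n‖) atTop (𝓝 0)) : T p = p := by
  by_contra hne
  have hδ : 0 < ‖T p - p‖ := norm_pos_iff.2 (sub_ne_zero.2 hne)
  have ha0 : 0 < a := lt_trans one_half_pos ha.1
  have ha1 : a ≤ 1 := ha.2.le
  have hbound : ∀ᶠ n in atTop,
      ‖u n - T p‖ ≤ ‖u n - p‖ + (1 + 2 * a) * ‖T (u n) - u n‖ := by
    filter_upwards [hres.eventually (eventually_le_nhds hδ)] with n hn
    set w : X := (1 - a) • (u n) + a • T (u n) with hwdef
    have hTu : T (u n) ∈ C := hT (huC n)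
    have hwC : w ∈ C := comb_mem hconv ha0.le ha1 (huC n) hTu
    have mem1 : w ∈ DaSet C T p a := ⟨hwC, u n, huC n, u n, huC n, hn, hn, rfl⟩
    have h1 : ‖T p - T w‖ ≤ ‖p - w‖ := hDa a ⟨le_rfl, ha1⟩ p hpC w mem1
    have mem2 : w ∈ DaSet C T (u n) a := ⟨hwC, u n, huC n, u n, huC n, le_rfl, le_rfl, rfl⟩
    have h2 : ‖T (u n) - T w‖ ≤ ‖u n - w‖ := hDa a ⟨le_rfl, ha1⟩ (u n) (huC n) w mem2
    have h3 : u n - w = a • (u n - T (u n)) := by rw [hwdef]; module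
    have h3' : ‖u n - w‖ = a * ‖T (u n) - u n‖ := by
      rw [h3, norm_smul, Real.norm_eq_abs, abs_of_nonneg ha0.le, norm_sub_rev]
    have tA : ‖u n - T p‖ ≤ ‖u n - T w‖ + ‖T w - T p‖ := by
      have := dist_triangle (u n) (T w) (T p)
      simpa [dist_eq_norm] using this
    have tB : ‖u n - T w‖ ≤ ‖u n - T (u n)‖ + ‖T (u n) - T w‖ := by
      have := dist_triangle (u n) (T (u n)) (T w)
      simpa [dist_eq_norm] using this
    have tC : ‖p - w‖ ≤ ‖p - u n‖ + ‖u n - w‖ := by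
      have := dist_triangle p (u n) w
      simpa [dist_eq_norm] using this
    have e1 : ‖T w - T p‖ = ‖T p - T w‖ := norm_sub_rev _ _
    have e2 : ‖u n - T (u n)‖ = ‖T (u n) - u n‖ := norm_sub_rev _ _
    have e3 : ‖p - u n‖ = ‖u n - p‖ := norm_sub_rev _ _
    have h2' : ‖T (u n) - T w‖ ≤ a * ‖T (u n) - u n‖ := by rw [← h3']; exact h2
    calc ‖u n - T p‖ ≤ ‖u n - T w‖ + ‖T w - T p‖ := tA
      _ ≤ (‖u n - T (u n)‖ + ‖T (u n) - T w‖) + ‖T p - T w‖ := by rw [← e1]; linarith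
      _ ≤ (‖T (u n) - u n‖ + a * ‖T (u n) - u n‖) + ‖p - w‖ := by
          rw [e2] at *; linarith
      _ ≤ (‖T (u n) - u n‖ + a * ‖T (u n) - u n‖) + (‖u n - p‖ + a * ‖T (u n) - u n‖) := by
          rw [← e3, ← h3']; linarith
      _ = ‖u n - p‖ + (1 + 2 * a) * ‖T (u n) - u n‖ := by ring
  have hO := hOp u p hw (T p) (fun h => hne h)
  have hle : liminf (fun n => ‖u n - T p‖) atTop ≤ liminf (fun n => ‖u n - p‖) atTop := by
    refine liminf_aux (e := fun n => (1 + 2 * a) * ‖T (u n) - u n‖) (B := M + ‖p‖)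
        (fun n => norm_nonneg _) (fun n => ?_) ?_ ?_
    · calc ‖u n - p‖ ≤ ‖u n‖ + ‖p‖ := norm_sub_le _ _
        _ ≤ M + ‖p‖ := by linarith [hM _ (huC n)]
    · have := hres.const_mul (1 + 2 * a)
      simpa using this
    · exact hbound
  exact absurd hO (not_lt.2 hle)


lemma kras_residual [UniformConvexSpace X] {C : Set X} (hconv : Convex ℝ C)
    {T : X → X} (hT : Set.MapsTo T C C) {a : ℝ} (ha : a ∈ Set.Ioo (1/2 : ℝ) 1)
    (hDa : CondDa C T a) {M : ℝ} (hM0 : 0 ≤ M) (hM : ∀ w ∈ C, ‖w‖ ≤ M)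
    {v0 : X} (hv0 : v0 ∈ C) :
    ∃ v : ℕ → X, (∀ k, v k ∈ C) ∧
      Tendsto (fun k => ‖T (v k) - v k‖) atTop (𝓝 0) := by
  have ha0 : 0 < a := lt_trans one_half_pos ha.1
  have ha1 : a ≤ 1 := ha.2.le
  set v : ℕ → X := fun k => Nat.rec (motive := fun _ => X) v0
    (fun _ w => (1 - a) • w + a • T w) k with hvdef
  have hv : ∀ k, v (k + 1) = (1 - a) • v k + a • T (v k) := fun k => rfl
  have hvC : ∀ k, v k ∈ C := by
    intro k
    induction k with
    | zero => exact hv0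
    | succ k ih => rw [hv k]; exact comb_mem hconv ha0.le ha1 ih (hT ih)
  refine ⟨v, hvC, ?_⟩
  set r : ℕ → ℝ := fun k => ‖T (v k) - v k‖ with hrdef
  have hstep : ∀ k, ‖T (v (k + 1)) - T (v k)‖ ≤ a * r k := by
    intro k
    have mem : v (k + 1) ∈ DaSet C T (v k) a :=
      ⟨hvC (k + 1), v k, hvC k, v k, hvC k, le_rfl, le_rfl, hv k⟩
    have h := hDa a ⟨le_rfl, ha1⟩ (v k) (hvC k) _ mem
    have he : v k - v (k + 1) = a • (v k - T (v k)) := by rw [hv k]; module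
    rw [norm_sub_rev]
    calc ‖T (v k) - T (v (k + 1))‖ ≤ ‖v k - v (k + 1)‖ := h
      _ = a * r k := by
          rw [he, norm_smul, Real.norm_eq_abs, abs_of_nonneg ha0.le, norm_sub_rev]
  have hrec : ∀ k, T (v (k + 1)) - v (k + 1)
      = (T (v (k + 1)) - T (v k)) + (1 - a) • (T (v k) - v k) := by
    intro k
    rw [hv k]; module
  have hranti : Antitone r := by
    refine antitone_nat_of_succ_le fun k => ?_
    calc r (k + 1) = ‖(T (v (k + 1)) - T (v k)) + (1 - a) • (T (v k) - v k)‖ := by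
          rw [show r (k + 1) = ‖T (v (k + 1)) - v (k + 1)‖ from rfl, hrec k]
      _ ≤ ‖T (v (k + 1)) - T (v k)‖ + ‖(1 - a) • (T (v k) - v k)‖ := norm_add_le _ _
      _ ≤ a * r k + (1 - a) * r k := by
          refine add_le_add (hstep k) ?_
          rw [norm_smul, Real.norm_eq_abs, abs_of_nonneg (by linarith : (0:ℝ) ≤ 1 - a)]
      _ = r k := by ring
  have hbdd : BddBelow (Set.range r) := ⟨0, by rintro _ ⟨k, rfl⟩; exact norm_nonneg _⟩
  set rho := ⨅ k, r k with hrhodef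
  have hrtend : Tendsto r atTop (𝓝 rho) := tendsto_atTop_ciInf hranti hbdd
  have hrho0 : 0 ≤ rho := le_ciInf fun k => norm_nonneg _
  have hrlb : ∀ k, rho ≤ r k := fun k => ciInf_le hbdd k
  -- Schu: consecutive residual vectors align
  have hediff : Tendsto (fun k => ‖(T (v (k + 1)) - v (k + 1)) - (T (v k) - v k)‖) atTop (𝓝 0) := by
    set u : ℕ → X := fun k => a⁻¹ • (T (v (k + 1)) - T (v k)) with hudef
    have hu : ∀ k, ‖u k‖ ≤ r k := by
      intro k
      rw [show u k = a⁻¹ • (T (v (k + 1)) - T (v k)) from rfl]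
      rw [norm_smul, Real.norm_eq_abs, abs_of_nonneg (inv_nonneg.2 ha0.le)]
      calc a⁻¹ * ‖T (v (k + 1)) - T (v k)‖ ≤ a⁻¹ * (a * r k) := by
            exact mul_le_mul_of_nonneg_left (hstep k) (inv_nonneg.2 ha0.le)
        _ = r k := by field_simp
    have hcombeq : ∀ k, a • u k + (1 - a) • (T (v k) - v k) = T (v (k + 1)) - v (k + 1) := by
      intro k
      rw [show u k = a⁻¹ • (T (v (k + 1)) - T (v k)) from rfl]
      rw [smul_inv_smul₀ ha0.ne', ← hrec k]
    have hcomb : Tendsto (fun k => ‖a • u k + (1 - a) • (T (v k) - v k)‖) atTop (𝓝 rho) := by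
      have : (fun k => ‖a • u k + (1 - a) • (T (v k) - v k)‖) = fun k => r (k + 1) := by
        funext k; rw [hcombeq k]
      rw [this]
      exact hrtend.comp (tendsto_add_atTop_nat 1)
    have hdiff0 := schu (X := X) ha0 ha.2 (lam := fun _ => a) (fun _ => ⟨le_rfl, le_rfl⟩)
      u (fun k => T (v k) - v k) hu (fun k => le_rfl) hrtend hcomb
    have heq : ∀ k, (T (v (k + 1)) - v (k + 1)) - (T (v k) - v k) = a • (u k - (T (v k) - v k)) := by
      intro k
      rw [show u k = a⁻¹ • (T (v (k + 1)) - T (v k)) from rfl]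
      rw [smul_sub, smul_inv_smul₀ ha0.ne', hrec k]; module
    have : (fun k => ‖(T (v (k + 1)) - v (k + 1)) - (T (v k) - v k)‖)
        = fun k => a * ‖u k - (T (v k) - v k)‖ := by
      funext k
      rw [heq k, norm_smul, Real.norm_eq_abs, abs_of_nonneg ha0.le]
    rw [this]
    have := hdiff0.const_mul a
    simpa using this
  -- rho = 0
  have hrho : rho = 0 := by
    by_contra hne0
    have hrpos : 0 < rho := lt_of_le_of_ne hrho0 (Ne.symm hne0)
    set m := ⌈(4 * M + 4) / (a * rho)⌉₊ with hmdef
    have hm0 : (0:ℝ) < (4 * M + 4) / (a * rho) := by positivity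
    have hm1 : 1 ≤ m := Nat.one_le_ceil_iff.2 hm0
    have hmpos : (0:ℝ) < (m:ℝ) := by exact_mod_cast hm1
    have hmge : (4 * M + 4) / (a * rho) ≤ (m : ℝ) := Nat.le_ceil _
    obtain ⟨K, hK⟩ := (hediff.eventually
      (eventually_le_nhds (by positivity : (0:ℝ) < rho / (2 * m)))).exists_forall_of_atTop
    have htele : ∀ i : ℕ, ‖(T (v (K + i)) - v (K + i)) - (T (v K) - v K)‖ ≤ i * (rho / (2 * m)) := by
      intro i
      induction i with
      | zero => simp
      | succ i ih =>
        have hsplit : (T (v (K + (i+1))) - v (K + (i+1))) - (T (v K) - v K)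
            = ((T (v ((K + i) + 1)) - v ((K + i) + 1)) - (T (v (K + i)) - v (K + i)))
              + ((T (v (K + i)) - v (K + i)) - (T (v K) - v K)) := by
          have : K + (i + 1) = (K + i) + 1 := rfl
          rw [this]; abel
        rw [hsplit]
        calc ‖_ + _‖ ≤ ‖(T (v ((K + i) + 1)) - v ((K + i) + 1)) - (T (v (K + i)) - v (K + i))‖
              + ‖(T (v (K + i)) - v (K + i)) - (T (v K) - v K)‖ := norm_add_le _ _
          _ ≤ rho / (2 * m) + i * (rho / (2 * m)) := add_le_add (hK (K + i) (Nat.le_add_right _ _)) ih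
          _ = ((i:ℕ) + 1 : ℕ) * (rho / (2 * m)) := by push_cast; ring
    have hsum : ∀ mm : ℕ, v (K + mm) - v K = a • ∑ i ∈ Finset.range mm, (T (v (K + i)) - v (K + i)) := by
      intro mm
      induction mm with
      | zero => simp
      | succ mm ih =>
        have hstepv : v ((K + mm) + 1) - v (K + mm) = a • (T (v (K + mm)) - v (K + mm)) := by
          rw [hv (K + mm)]; module
        have : K + (mm + 1) = (K + mm) + 1 := rfl
        rw [this, Finset.sum_range_succ, smul_add, ← ih]
        rw [show v ((K + mm) + 1) - v K = (v (K + mm) - v K) + (v ((K + mm) + 1) - v (K + mm)) by abel,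
          hstepv]
    have hlow : (m : ℝ) * rho / 2 ≤ ‖∑ i ∈ Finset.range m, (T (v (K + i)) - v (K + i))‖ := by
      have h2 : ‖∑ i ∈ Finset.range m, ((T (v (K + i)) - v (K + i)) - (T (v K) - v K))‖
          ≤ (m : ℝ) * (rho / 2) := by
        refine (norm_sum_le _ _).trans ?_
        have hterm : ∀ i ∈ Finset.range m,
            ‖(T (v (K + i)) - v (K + i)) - (T (v K) - v K)‖ ≤ rho / 2 := by
          intro i hi
          refine (htele i).trans ?_
          have hi' : (i : ℝ) ≤ (m : ℝ) := by
            exact_mod_cast (Finset.mem_range.1 hi).le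
          calc (i : ℝ) * (rho / (2 * m)) ≤ (m : ℝ) * (rho / (2 * m)) := by
                apply mul_le_mul_of_nonneg_right hi' (by positivity)
            _ = rho / 2 := by field_simp
        refine (Finset.sum_le_sum hterm).trans ?_
        rw [Finset.sum_const, Finset.card_range, nsmul_eq_mul]
      have h3 : (m : ℝ) * rho ≤ ‖(m : ℝ) • (T (v K) - v K)‖ := by
        rw [norm_smul, Real.norm_eq_abs, abs_of_nonneg hmpos.le]
        exact mul_le_mul_of_nonneg_left (hrlb K) hmpos.le
      have h4 : (m : ℝ) • (T (v K) - v K)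
          = (∑ i ∈ Finset.range m, (T (v (K + i)) - v (K + i)))
            - ∑ i ∈ Finset.range m, ((T (v (K + i)) - v (K + i)) - (T (v K) - v K)) := by
        rw [Finset.sum_sub_distrib (f := fun i => T (v (K + i)) - v (K + i))
          (g := fun _ => T (v K) - v K), Finset.sum_const, Finset.card_range,
          ← Nat.cast_smul_eq_nsmul ℝ]
        abel
      have h5 := norm_sub_le (∑ i ∈ Finset.range m, (T (v (K + i)) - v (K + i)))
        (∑ i ∈ Finset.range m, ((T (v (K + i)) - v (K + i)) - (T (v K) - v K)))
      rw [← h4] at h5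
      linarith
    have hnormv : ‖v (K + m) - v K‖ ≤ 2 * M :=
      le_trans (norm_sub_le _ _) (by linarith [hM _ (hvC (K + m)), hM _ (hvC K)])
    rw [hsum m] at hnormv
    rw [norm_smul, Real.norm_eq_abs, abs_of_nonneg ha0.le] at hnormv
    have h6 : a * ((m : ℝ) * rho / 2) ≤ 2 * M :=
      le_trans (mul_le_mul_of_nonneg_left hlow ha0.le) hnormv
    have hge : 4 * M + 4 ≤ (m : ℝ) * (a * rho) := (div_le_iff₀ (by positivity)).1 hmge
    nlinarith
  rw [hrho] at hrtend
  exact hrtend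

end auxiliary

theorem stmt9 [NormedAddCommGroup X] [NormedSpace ℝ X] [UniformConvexSpace X]
    [CompleteSpace X]
    (hOp : OpialCond X)
    {C : Set X} (hC : C.Nonempty) (hconv : Convex ℝ C)
    (hcomp : IsCompact ((toWeakSpace ℝ X) '' C))
    {T : X → X} (hT : Set.MapsTo T C C)
    {a : ℝ} (ha : a ∈ Set.Ioo (1/2 : ℝ) 1) (hDa : CondDa C T a)
    {s t : ℝ} (hs : 0 < s) (ht : t < 1)
    {an bn cn : ℕ → ℝ} (han : ∀ n, s ≤ an n ∧ an n ≤ t)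
    (hbn : ∀ n, s ≤ bn n ∧ bn n ≤ t) (hcn : ∀ n, s ≤ cn n ∧ cn n ≤ t)
    {x y z : ℕ → X} (hx0 : x 0 ∈ C)
    (hz : ∀ n, z n = (1 - cn n) • x n + cn n • T (x n))
    (hy : ∀ n, y n = (1 - bn n) • z n + bn n • T (z n))
    (hxs : ∀ n, x (n + 1) = (1 - an n) • T (z n) + an n • T (y n)) :
    ∃ p ∈ C, T p = p ∧ WeakConv x p := by
  obtain ⟨M, hM0, hM⟩ := weak_compact_bounded hcomp
  have ha0 : (0:ℝ) < a := lt_trans one_half_pos ha.1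
  have ha1 : a ≤ 1 := ha.2.le
  have hco : ∀ w : ℕ → ℝ, (∀ n, s ≤ w n ∧ w n ≤ t) → ∀ n, 0 ≤ w n ∧ w n ≤ 1 :=
    fun w hwn n => ⟨le_trans hs.le (hwn n).1, le_trans (hwn n).2 ht.le⟩
  -- memberships
  have hxC : ∀ n, x n ∈ C := by
    intro n
    induction n with
    | zero => exact hx0
    | succ n ih =>
      have hzC : z n ∈ C := by
        rw [hz n]; exact comb_mem hconv (hco cn hcn n).1 (hco cn hcn n).2 ih (hT ih)
      have hyC : y n ∈ C := by
        rw [hy n]; exact comb_mem hconv (hco bn hbn n).1 (hco bn hbn n).2 hzC (hT hzC)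
      rw [hxs n]
      exact comb_mem hconv (hco an han n).1 (hco an han n).2 (hT hzC) (hT hyC)
  have hzC : ∀ n, z n ∈ C := fun n => by
    rw [hz n]; exact comb_mem hconv (hco cn hcn n).1 (hco cn hcn n).2 (hxC n) (hT (hxC n))
  have hyC : ∀ n, y n ∈ C := fun n => by
    rw [hy n]; exact comb_mem hconv (hco bn hbn n).1 (hco bn hbn n).2 (hzC n) (hT (hzC n))
  -- a fixed point exists
  obtain ⟨v0, hv0⟩ := hC
  obtain ⟨v, hvC, hvres⟩ := kras_residual hconv hT ha hDa hM0 hM hv0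
  obtain ⟨q, hqC, ψ, hψ, hwq⟩ := exists_weakConv_subseq hcomp v hvC
  have hqfix : T q = q :=
    demiclosed hOp hconv hT ha hDa hM (fun j => hvC (ψ j)) hqC hwq
      (hvres.comp hψ.tendsto_atTop)
  -- quasi-nonexpansiveness with respect to fixed points
  have quasi : ∀ q' ∈ C, T q' = q' → ∀ w ∈ C, ‖T w - q'‖ ≤ ‖w - q'‖ := by
    intro q' hq'C hfix w hw
    have memq : q' ∈ DaSet C T w a := by
      refine ⟨hq'C, q', hq'C, q', hq'C, ?_, ?_, ?_⟩
      · rw [hfix]; simpa using norm_nonneg _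
      · rw [hfix]; simpa using norm_nonneg _
      · rw [hfix]; module
    have := hDa a ⟨le_rfl, ha1⟩ w hw q' memq
    rwa [hfix] at this
  -- distances to fixed points are monotone
  have hmono : ∀ q' ∈ C, T q' = q' →
      (∀ n, ‖x (n + 1) - q'‖ ≤ ‖z n - q'‖) ∧ (∀ n, ‖z n - q'‖ ≤ ‖x n - q'‖) := by
    intro q' hq'C hfix
    have hzle : ∀ n, ‖z n - q'‖ ≤ ‖x n - q'‖ := by
      intro n
      rw [hz n]
      refine (norm_comb_le (hco cn hcn n).1 (hco cn hcn n).2 _ _ _).trans ?_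
      have h1 := quasi q' hq'C hfix (x n) (hxC n)
      have h2 := mul_le_mul_of_nonneg_left h1 (hco cn hcn n).1
      linarith
    have hyle : ∀ n, ‖y n - q'‖ ≤ ‖z n - q'‖ := by
      intro n
      rw [hy n]
      refine (norm_comb_le (hco bn hbn n).1 (hco bn hbn n).2 _ _ _).trans ?_
      have h1 := quasi q' hq'C hfix (z n) (hzC n)
      have h2 := mul_le_mul_of_nonneg_left h1 (hco bn hbn n).1
      linarith
    have hxle : ∀ n, ‖x (n + 1) - q'‖ ≤ ‖z n - q'‖ := by
      intro n
      rw [hxs n]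
      refine (norm_comb_le (hco an han n).1 (hco an han n).2 _ _ _).trans ?_
      have h1 := quasi q' hq'C hfix (z n) (hzC n)
      have h2 := quasi q' hq'C hfix (y n) (hyC n)
      have h3 := hyle n
      have h4 := mul_le_mul_of_nonneg_left (le_trans h2 h3) (hco an han n).1
      have h5 := mul_le_mul_of_nonneg_left h1
        (by linarith [(hco an han n).2] : (0:ℝ) ≤ 1 - an n)
      linarith
    exact ⟨hxle, hzle⟩
  have hdist : ∀ q' ∈ C, T q' = q' → ∃ L, Tendsto (fun n => ‖x n - q'‖) atTop (𝓝 L) := by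
    intro q' hq'C hfix
    obtain ⟨hxle, hzle⟩ := hmono q' hq'C hfix
    have hanti : Antitone fun n => ‖x n - q'‖ :=
      antitone_nat_of_succ_le fun n => (hxle n).trans (hzle n)
    exact ⟨_, tendsto_atTop_ciInf hanti ⟨0, by rintro _ ⟨n, rfl⟩; exact norm_nonneg _⟩⟩
  -- residuals of the iteration tend to zero
  obtain ⟨d, hd⟩ := hdist q hqC hqfix
  obtain ⟨hxle, hzle⟩ := hmono q hqC hqfix
  have hzd : Tendsto (fun n => ‖z n - q‖) atTop (𝓝 d) := by
    have hlow : Tendsto (fun n => ‖x (n + 1) - q‖) atTop (𝓝 d) :=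
      hd.comp (tendsto_add_atTop_nat 1)
    exact tendsto_of_tendsto_of_tendsto_of_le_of_le hlow hd hxle hzle
  have hres : Tendsto (fun n => ‖T (x n) - x n‖) atTop (𝓝 0) := by
    have hcomb : Tendsto (fun n => ‖cn n • (T (x n) - q) + (1 - cn n) • (x n - q)‖)
        atTop (𝓝 d) := by
      have heq : (fun n => ‖cn n • (T (x n) - q) + (1 - cn n) • (x n - q)‖)
          = fun n => ‖z n - q‖ := by
        funext n
        congr 1
        rw [hz n]; module
      rw [heq]; exact hzd
    have hsch := schu hs ht (fun n => ⟨(hcn n).1, (hcn n).2⟩)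
      (fun n => T (x n) - q) (fun n => x n - q)
      (fun n => quasi q hqC hqfix (x n) (hxC n)) (fun n => le_rfl) hd hcomb
    have heq : (fun n => ‖(T (x n) - q) - (x n - q)‖) = fun n => ‖T (x n) - x n‖ := by
      funext n; rw [sub_sub_sub_cancel_right]
    rwa [heq] at hsch
  -- the weak subsequential limit p
  obtain ⟨p, hpC, φ, hφ, hwp⟩ := exists_weakConv_subseq hcomp x hxC
  have hpfix : T p = p :=
    demiclosed hOp hconv hT ha hDa hM (fun j => hxC (φ j)) hpC hwp
      (hres.comp hφ.tendsto_atTop)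
  obtain ⟨L, hL⟩ := hdist p hpC hpfix
  -- uniqueness of weak subsequential limits among fixed points
  have huniq : ∀ p' ∈ C, T p' = p' →
      (∃ σ : ℕ → ℕ, Tendsto σ atTop atTop ∧ WeakConv (fun j => x (σ j)) p') → p' = p := by
    rintro p' hp'C hp'fix ⟨σ, hσ, hwσ⟩
    by_contra hne
    obtain ⟨L', hL'⟩ := hdist p' hp'C hp'fix
    have h1 := hOp (fun j => x (φ j)) p hwp p' hne
    have h2 := hOp (fun j => x (σ j)) p' hwσ p (fun h => hne h.symm)
    have e1 : liminf (fun j => ‖x (φ j) - p‖) atTop = L := by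
      have hh : Tendsto (fun j => ‖x (φ j) - p‖) atTop (𝓝 L) := hL.comp hφ.tendsto_atTop
      exact hh.liminf_eq
    have e2 : liminf (fun j => ‖x (φ j) - p'‖) atTop = L' := by
      have hh : Tendsto (fun j => ‖x (φ j) - p'‖) atTop (𝓝 L') := hL'.comp hφ.tendsto_atTop
      exact hh.liminf_eq
    have e3 : liminf (fun j => ‖x (σ j) - p'‖) atTop = L' := by
      have hh : Tendsto (fun j => ‖x (σ j) - p'‖) atTop (𝓝 L') := hL'.comp hσ
      exact hh.liminf_eq
    have e4 : liminf (fun j => ‖x (σ j) - p‖) atTop = L := by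
      have hh : Tendsto (fun j => ‖x (σ j) - p‖) atTop (𝓝 L) := hL.comp hσ
      exact hh.liminf_eq
    rw [e1, e2] at h1
    rw [e3, e4] at h2
    linarith
  -- whole-sequence weak convergence
  refine ⟨p, hpC, hpfix, ?_⟩
  intro f
  refine tendsto_of_subseq_tendsto fun ns hns => ?_
  obtain ⟨p'', hp''C, ms, hms, hwns⟩ :=
    exists_weakConv_subseq hcomp (fun j => x (ns j)) (fun j => hxC (ns j))
  have hcompres : Tendsto (fun j => ‖T (x (ns (ms j))) - x (ns (ms j))‖) atTop (𝓝 0) :=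
    hres.comp (hns.comp hms.tendsto_atTop)
  have hp''fix : T p'' = p'' :=
    demiclosed hOp hconv hT ha hDa hM (fun j => hxC (ns (ms j))) hp''C hwns hcompres
  have hp''p : p'' = p :=
    huniq p'' hp''C hp''fix ⟨fun j => ns (ms j), hns.comp hms.tendsto_atTop, hwns⟩
  refine ⟨ms, ?_⟩
  have := hwns f
  rw [hp''p] at this
  exact this
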